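/- Coefficient bound in the proof of Lemma 3: let p, n, m be positive integers, q = n+m, and let M be a Hermitian matrix on the p×q grid of qubits with operator norm at most 1. Let M̃ = (1/q!)·Σ_{π ∈ S_q} P_π M P_π† be its average over all column permutations. Then for every nonzero v ∈ {0,1,2,3}^p, with A the p×q matrix whose first n columns each equal v and whose last m columns are zero, |tr(M̃ · σ_A)| ≤ 2^{pq} · (binom(n+m, n))^{−1/2}. -/

import Mathlib

open Matrix ComplexOrder

noncomputable section

/-- States of a `p × q` grid of qubits. -/
abbrev GState (p q : ℕ) := Fin p × Fin q → Fin 2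

/-- Operators on a `p × q` grid of qubits. -/
abbrev GMat (p q : ℕ) := Matrix (GState p q) (GState p q) ℂ

/-- The CNOT gate on the grid with control qubit `c` and target qubit `t`:
the permutation matrix mapping the basis state `f` to `f` updated at `t` to
`f t + f c` (mod 2). -/
def gCNOT {p q : ℕ} (c t : Fin p × Fin q) : GMat p q :=
  fun g f => if g = Function.update f t (f t + f c) then 1 else 0

/-- The encoding unitary `U_x = (C_{(x,1)→(x,2)} ⋯ C_{(x,1)→(x,n)})·
(C_{(x,2)→(x,1)} ⋯ C_{(x,n)→(x,1)})` acting on the first `n` columns of row `x`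
(columns 1-indexed in the informal statement, 0-indexed here). -/
def rowU {p q : ℕ} (n : ℕ) (hn : 0 < n) (hnq : n ≤ q) (x : Fin p) : GMat p q :=
  (((List.range n).map fun j =>
      if hj : 0 < j ∧ j < n then
        gCNOT (x, ⟨0, lt_of_lt_of_le hn hnq⟩) (x, ⟨j, lt_of_lt_of_le hj.2 hnq⟩)
      else 1).prod) *
  (((List.range n).map fun j =>
      if hj : 0 < j ∧ j < n then
        gCNOT (x, ⟨j, lt_of_lt_of_le hj.2 hnq⟩) (x, ⟨0, lt_of_lt_of_le hn hnq⟩)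
      else 1).prod)

/-- The full encoding unitary `U = ⊗_x U_x` (identity on columns `n+1,…,q`). -/
def encU (p q n : ℕ) (hn : 0 < n) (hnq : n ≤ q) : GMat p q :=
  ((List.finRange p).map fun x => rowU n hn hnq x).prod

/-- The channel `E` which takes a density matrix `Ψ` on the `p` qubits of the first
column and returns `Ψ ⊗ (I/2)^{⊗ p(q−1)}` on the full grid, the maximally mixed state
on all other columns. -/
def Echan (p q : ℕ) (hq : 0 < q) (Ψ : Matrix (Fin p → Fin 2) (Fin p → Fin 2) ℂ) :
    GMat p q :=
  fun g f =>
    Ψ (fun x => g (x, ⟨0, hq⟩)) (fun x => f (x, ⟨0, hq⟩)) *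
      (if ∀ (x : Fin p) (y : Fin q), y ≠ ⟨0, hq⟩ → g (x, y) = f (x, y) then
        ((1 : ℂ) / 2) ^ (p * (q - 1)) else 0)

/-- For a permutation `π` of the columns, `P_π` is the unitary permutation matrix
mapping the basis state `f` to the basis state `g` with `g (x, π y) = f (x, y)`. -/
def permMat (p q : ℕ) (π : Equiv.Perm (Fin q)) : GMat p q :=
  fun g f => if ∀ (x : Fin p) (y : Fin q), g (x, π y) = f (x, y) then 1 else 0

/-- The average `(1/q!)·Σ_{π ∈ S_q} P_π ρ P_π†` of `ρ` over all column permutations. -/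
def permAvg (p q : ℕ) (ρ : GMat p q) : GMat p q :=
  ((Nat.factorial q : ℂ))⁻¹ •
    ∑ π : Equiv.Perm (Fin q), permMat p q π * ρ * (permMat p q π)ᴴ

/-- The Pauli matrices `σ₀ = I`, `σ₁ = X`, `σ₂ = Y`, `σ₃ = Z`. -/
def pauli : Fin 4 → Matrix (Fin 2) (Fin 2) ℂ :=
  ![1, !![0, 1; 1, 0], !![0, -Complex.I; Complex.I, 0], !![1, 0; 0, -1]]

/-- For a `p × q` matrix `A` with entries in `{0,1,2,3}`, the Pauli string
`σ_A = ⊗_{(x,y)} σ_{A(x,y)}` on the grid. -/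
def gridPauli {p q : ℕ} (A : Fin p → Fin q → Fin 4) : GMat p q :=
  fun g f => ∏ z : Fin p × Fin q, pauli (A z.1 z.2) (g z) (f z)

namespace CoeffBoundAux

variable {p q : ℕ}

/-- The action of a column permutation on grid states. -/
def colPerm (p q : ℕ) (π : Equiv.Perm (Fin q)) (g : GState p q) : GState p q :=
  fun z => g (z.1, π⁻¹ z.2)

lemma permMat_apply (π : Equiv.Perm (Fin q)) (a g : GState p q) :
    permMat p q π a g = if a = colPerm p q π g then 1 else 0 := by
  unfold permMat colPerm
  congr 1
  apply propext
  constructor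
  · intro h; funext z
    have := h z.1 (π⁻¹ z.2)
    simpa using this
  · intro h x y; rw [h]; simp

lemma mul_permMat (π : Equiv.Perm (Fin q)) (X : GMat p q) (a f : GState p q) :
    (X * permMat p q π) a f = X a (colPerm p q π f) := by
  rw [Matrix.mul_apply]
  simp only [permMat_apply, mul_ite, mul_one, mul_zero]
  rw [Finset.sum_ite_eq' Finset.univ (colPerm p q π f) (fun b => X a b)]
  simp

lemma conjT_permMat_mul (π : Equiv.Perm (Fin q)) (X : GMat p q) (g b : GState p q) :
    ((permMat p q π)ᴴ * X) g b = X (colPerm p q π g) b := by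
  rw [Matrix.mul_apply]
  simp only [Matrix.conjTranspose_apply, permMat_apply, apply_ite (star : ℂ → ℂ),
    star_one, star_zero, ite_mul, one_mul, zero_mul]
  rw [Finset.sum_ite_eq' Finset.univ (colPerm p q π g) (fun a => X a b)]
  simp

lemma perm_conj_pauli (π : Equiv.Perm (Fin q)) (A : Fin p → Fin q → Fin 4) :
    (permMat p q π)ᴴ * gridPauli A * permMat p q π
      = gridPauli (fun x y => A x (π y)) := by
  ext g f
  rw [mul_permMat, conjT_permMat_mul]
  unfold gridPauli colPerm
  apply Fintype.prod_equiv ((Equiv.refl (Fin p)).prodCongr π⁻¹)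
  intro z
  cases z
  simp [Prod.map]

lemma pauli_orth (a b : Fin 4) :
    ∑ i : Fin 2, ∑ j : Fin 2, (starRingEnd ℂ) (pauli a i j) * pauli b i j
      = if a = b then 2 else 0 := by
  fin_cases a <;> fin_cases b <;>
    simp [pauli, Fin.sum_univ_two, Matrix.one_apply, Complex.ext_iff] <;> norm_num

lemma gridPauli_orth (A B : Fin p → Fin q → Fin 4) :
    ∑ g : GState p q, ∑ f : GState p q,
        (starRingEnd ℂ) (gridPauli A g f) * gridPauli B g f
      = if A = B then (2:ℂ) ^ (p * q) else 0 := by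
  have key : ∀ g f : GState p q,
      (starRingEnd ℂ) (gridPauli A g f) * gridPauli B g f
        = ∏ z : Fin p × Fin q,
            ((starRingEnd ℂ) (pauli (A z.1 z.2) (g z) (f z)) * pauli (B z.1 z.2) (g z) (f z)) := by
    intro g f
    simp only [gridPauli]
    rw [map_prod, ← Finset.prod_mul_distrib]
  simp only [key]
  have step1 : ∀ g : GState p q,
      ∑ f : GState p q, ∏ z : Fin p × Fin q,
        ((starRingEnd ℂ) (pauli (A z.1 z.2) (g z) (f z)) * pauli (B z.1 z.2) (g z) (f z))
      = ∏ z : Fin p × Fin q, ∑ j : Fin 2,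
        ((starRingEnd ℂ) (pauli (A z.1 z.2) (g z) j) * pauli (B z.1 z.2) (g z) j) := by
    intro g
    rw [Finset.prod_univ_sum (fun _ => (Finset.univ : Finset (Fin 2)))]
    rw [← Fintype.piFinset_univ]
  simp only [step1]
  have step2 :
      ∑ g : GState p q, ∏ z : Fin p × Fin q, ∑ j : Fin 2,
        ((starRingEnd ℂ) (pauli (A z.1 z.2) (g z) j) * pauli (B z.1 z.2) (g z) j)
      = ∏ z : Fin p × Fin q, ∑ i : Fin 2, ∑ j : Fin 2,
        ((starRingEnd ℂ) (pauli (A z.1 z.2) i j) * pauli (B z.1 z.2) i j) := by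
    rw [Finset.prod_univ_sum (fun _ => (Finset.univ : Finset (Fin 2)))]
    rw [← Fintype.piFinset_univ]
  rw [step2]
  simp only [pauli_orth]
  by_cases h : A = B
  · subst h
    simp [Finset.prod_const, Finset.card_univ]
  · rw [if_neg h]
    have : ∃ z : Fin p × Fin q, A z.1 z.2 ≠ B z.1 z.2 := by
      by_contra hc
      push_neg at hc
      exact h (funext fun x => funext fun y => hc (x, y))
    obtain ⟨z, hz⟩ := this
    exact Finset.prod_eq_zero (Finset.mem_univ z) (by simp [hz])

lemma col_bound (M : GMat p q) (h : ‖Matrix.toEuclideanCLM (𝕜 := ℂ) M‖ ≤ 1)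
    (f : GState p q) : ∑ g : GState p q, ‖M g f‖ ^ 2 ≤ 1 := by
  classical
  set T := Matrix.toEuclideanCLM (𝕜 := ℂ) M
  set x : EuclideanSpace ℂ (GState p q) := EuclideanSpace.single f 1
  have hx : ‖x‖ = 1 := by simp [x]
  have happ : ∀ g, T x g = M g f := by
    intro g
    change (M *ᵥ WithLp.ofLp x) g = M g f
    simp [x, Matrix.mulVec, dotProduct, EuclideanSpace.single_apply]
  have hnorm : ‖T x‖ ≤ 1 := by
    calc ‖T x‖ ≤ ‖T‖ * ‖x‖ := T.le_opNorm x
    _ ≤ 1 := by rw [hx, mul_one]; exact h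
  have hsq : ∑ g : GState p q, ‖M g f‖ ^ 2 = ‖T x‖ ^ 2 := by
    rw [EuclideanSpace.norm_eq, Real.sq_sqrt (by positivity)]
    exact Finset.sum_congr rfl fun g _ => by rw [happ g]
  rw [hsq]
  exact pow_le_one₀ (norm_nonneg _) hnorm

def eLt (n m : ℕ) : {y : Fin (n+m) // (y:ℕ) < n} ≃ Fin n where
  toFun y := ⟨y.1, y.2⟩
  invFun j := ⟨⟨j, by omega⟩, j.2⟩
  left_inv y := by apply Subtype.ext; apply Fin.ext; rfl
  right_inv j := rfl

def eGe (n m : ℕ) : {y : Fin (n+m) // ¬ ((y:ℕ) < n)} ≃ Fin m where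
  toFun y := ⟨y.1 - n, by have := y.1.2; have := y.2; omega⟩
  invFun j := ⟨⟨n + j, by omega⟩, by simp⟩
  left_inv y := by apply Subtype.ext; apply Fin.ext; have := y.2; simp; omega
  right_inv j := by apply Fin.ext; simp

lemma card_stab (n m : ℕ) :
    Fintype.card {σ : Equiv.Perm (Fin (n+m)) // ∀ y, ((σ y : ℕ) < n ↔ (y:ℕ) < n)}
      ≤ n.factorial * m.factorial := by
  have Finj : Function.Injective
      (fun σ : {σ : Equiv.Perm (Fin (n+m)) // ∀ y, ((σ y : ℕ) < n ↔ (y:ℕ) < n)} =>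
        ((σ.1.subtypePerm (fun y => (σ.2 y)) :
            Equiv.Perm {y : Fin (n+m) // (y:ℕ) < n}),
         (σ.1.subtypePerm (fun y => not_congr (σ.2 y)) :
            Equiv.Perm {y : Fin (n+m) // ¬ ((y:ℕ) < n)}))) := by
    intro σ τ h
    simp only [Prod.mk.injEq] at h
    apply Subtype.ext
    apply Equiv.ext
    intro y
    by_cases hy : (y:ℕ) < n
    · have := congrFun (congrArg (fun e => (Equiv.toFun e)) h.1) ⟨y, hy⟩
      simpa [Equiv.Perm.subtypePerm] using congrArg Subtype.val this
    · have := congrFun (congrArg (fun e => (Equiv.toFun e)) h.2) ⟨y, hy⟩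
      simpa [Equiv.Perm.subtypePerm] using congrArg Subtype.val this
  calc Fintype.card {σ : Equiv.Perm (Fin (n+m)) // ∀ y, ((σ y : ℕ) < n ↔ (y:ℕ) < n)}
      ≤ Fintype.card (Equiv.Perm {y : Fin (n+m) // (y:ℕ) < n} ×
          Equiv.Perm {y : Fin (n+m) // ¬ ((y:ℕ) < n)}) := Fintype.card_le_of_injective _ Finj
    _ = n.factorial * m.factorial := by
        rw [Fintype.card_prod, Fintype.card_perm, Fintype.card_perm,
          Fintype.card_congr (eLt n m), Fintype.card_congr (eGe n m),
          Fintype.card_fin, Fintype.card_fin]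

lemma count_le (n m : ℕ) (π : Equiv.Perm (Fin (n+m))) :
    (Finset.univ.filter (fun τ : Equiv.Perm (Fin (n+m)) =>
        ∀ y, ((π y : ℕ) < n ↔ (τ y : ℕ) < n))).card ≤ n.factorial * m.factorial := by
  classical
  have hcard : (Finset.univ.filter (fun τ : Equiv.Perm (Fin (n+m)) =>
        ∀ y, ((π y : ℕ) < n ↔ (τ y : ℕ) < n))).card
      = (Finset.univ.filter (fun σ : Equiv.Perm (Fin (n+m)) =>
        ∀ y, ((σ y : ℕ) < n ↔ (y : ℕ) < n))).card := by
    apply Finset.card_bij' (fun τ _ => τ * π⁻¹) (fun σ _ => σ * π)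
    · intro τ hτ
      simp only [Finset.mem_filter, Finset.mem_univ, true_and] at hτ ⊢
      intro y
      have := hτ (π⁻¹ y)
      simpa using this.symm
    · intro σ hσ
      simp only [Finset.mem_filter, Finset.mem_univ, true_and] at hσ ⊢
      intro y
      have := hσ (π y)
      simpa using this.symm
    · intro τ _; simp [mul_assoc]
    · intro σ _; simp [mul_assoc]
  rw [hcard]
  calc (Finset.univ.filter (fun σ : Equiv.Perm (Fin (n+m)) =>
        ∀ y, ((σ y : ℕ) < n ↔ (y : ℕ) < n))).card
      = Fintype.card {σ : Equiv.Perm (Fin (n+m)) // ∀ y, ((σ y : ℕ) < n ↔ (y:ℕ) < n)} :=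
        (Fintype.card_subtype _).symm
    _ ≤ n.factorial * m.factorial := card_stab n m

variable {p q : ℕ}

lemma sum_swap_pairs {α : Type*} [Fintype α] (F : α → α → ℂ) :
    ∑ z : α × α, F z.2 z.1 = ∑ g, ∑ f, F g f := by
  rw [Fintype.sum_prod_type]
  exact Finset.sum_comm

def Gp (p n m : ℕ) (v : Fin p → Fin 4) (π : Equiv.Perm (Fin (n+m))) : GMat p (n+m) :=
  gridPauli (fun x y => if ((π y : ℕ) < n) then v x else 0)

def Np (p n m : ℕ) (v : Fin p → Fin 4) : GMat p (n+m) :=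
  (((n+m).factorial : ℂ))⁻¹ • ∑ π : Equiv.Perm (Fin (n+m)), Gp p n m v π

lemma cond_iff (n m : ℕ) (v : Fin p → Fin 4) (hv : v ≠ fun _ => 0)
    (π τ : Equiv.Perm (Fin (n+m))) :
    ((fun x (y : Fin (n+m)) => if ((π y : ℕ) < n) then v x else 0)
      = fun x y => if ((τ y : ℕ) < n) then v x else 0)
      ↔ ∀ y : Fin (n+m), ((π y : ℕ) < n ↔ (τ y : ℕ) < n) := by
  constructor
  · intro h y
    obtain ⟨x₀, hx₀⟩ : ∃ x, v x ≠ 0 := by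
      by_contra hc; push_neg at hc; exact hv (funext hc)
    have := congrFun (congrFun h x₀) y
    by_cases h1 : (π y : ℕ) < n <;> by_cases h2 : (τ y : ℕ) < n <;>
      simp [h1, h2] at this ⊢ <;> tauto
  · intro h
    funext x y
    by_cases h1 : (π y : ℕ) < n
    · rw [if_pos h1, if_pos ((h y).mp h1)]
    · rw [if_neg h1, if_neg (fun hh => h1 ((h y).mpr hh))]

lemma S2_bound (p n m : ℕ) (v : Fin p → Fin 4) (hv : v ≠ fun _ => 0) :
    ∑ z : GState p (n+m) × GState p (n+m), ‖Np p n m v z.2 z.1‖ ^ 2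
      ≤ 2 ^ (p * (n+m)) *
        ((n.factorial * m.factorial : ℝ) / (n+m).factorial) := by
  classical
  set c : ℂ := (((n+m).factorial : ℂ))⁻¹ with hc
  have hcconj : (starRingEnd ℂ) c = c := by
    rw [hc, map_inv₀, Complex.conj_natCast]
  -- complex form of the sum
  have hofReal :
      ((∑ z : GState p (n+m) × GState p (n+m), ‖Np p n m v z.2 z.1‖ ^ 2 : ℝ) : ℂ)
        = ∑ z : GState p (n+m) × GState p (n+m),
            (starRingEnd ℂ) (Np p n m v z.2 z.1) * Np p n m v z.2 z.1 := by
    push_cast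
    refine Finset.sum_congr rfl fun z _ => ?_
    rw [← Complex.ofReal_pow, Complex.sq_norm, mul_comm, Complex.mul_conj]
  -- expand N
  have hNapp : ∀ f g : GState p (n+m),
      Np p n m v f g = c * ∑ π : Equiv.Perm (Fin (n+m)), Gp p n m v π f g := by
    intro f g
    rw [Np, Matrix.smul_apply, Matrix.sum_apply, smul_eq_mul]
  have hexp : ∑ z : GState p (n+m) × GState p (n+m),
        (starRingEnd ℂ) (Np p n m v z.2 z.1) * Np p n m v z.2 z.1
      = c ^ 2 * ∑ π : Equiv.Perm (Fin (n+m)), ∑ τ : Equiv.Perm (Fin (n+m)),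
          ∑ z : GState p (n+m) × GState p (n+m),
            (starRingEnd ℂ) (Gp p n m v π z.2 z.1) * Gp p n m v τ z.2 z.1 := by
    have e1 : ∀ z : GState p (n+m) × GState p (n+m),
        (starRingEnd ℂ) (Np p n m v z.2 z.1) * Np p n m v z.2 z.1
          = c ^ 2 * ∑ π : Equiv.Perm (Fin (n+m)), ∑ τ : Equiv.Perm (Fin (n+m)),
              (starRingEnd ℂ) (Gp p n m v π z.2 z.1) * Gp p n m v τ z.2 z.1 := by
      intro z
      rw [hNapp z.2 z.1, _root_.map_mul, hcconj, map_sum, mul_mul_mul_comm, ← sq,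
        Finset.sum_mul_sum]
    rw [Finset.sum_congr rfl fun z _ => e1 z, ← Finset.mul_sum]
    congr 1
    rw [Finset.sum_comm]
    refine Finset.sum_congr rfl fun π _ => Finset.sum_comm
  -- orthogonality
  have horth : ∀ π τ : Equiv.Perm (Fin (n+m)),
      ∑ z : GState p (n+m) × GState p (n+m),
          (starRingEnd ℂ) (Gp p n m v π z.2 z.1) * Gp p n m v τ z.2 z.1
        = if (∀ y : Fin (n+m), ((π y : ℕ) < n ↔ (τ y : ℕ) < n))
            then (2:ℂ) ^ (p * (n+m)) else 0 := by
    intro π τ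
    rw [sum_swap_pairs (fun g f => (starRingEnd ℂ) (Gp p n m v π g f) * Gp p n m v τ g f)]
    rw [Gp, Gp, gridPauli_orth]
    exact if_congr (cond_iff n m v hv π τ) rfl rfl
  -- counting
  have hcount : ∀ π : Equiv.Perm (Fin (n+m)),
      ∑ τ : Equiv.Perm (Fin (n+m)),
          (if (∀ y : Fin (n+m), ((π y : ℕ) < n ↔ (τ y : ℕ) < n))
            then (2:ℂ) ^ (p * (n+m)) else 0)
        = (2:ℂ) ^ (p * (n+m)) *
          ((Finset.univ.filter (fun τ : Equiv.Perm (Fin (n+m)) =>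
            ∀ y, ((π y : ℕ) < n ↔ (τ y : ℕ) < n))).card : ℂ) := by
    intro π
    rw [Finset.sum_ite, Finset.sum_const, Finset.sum_const_zero, add_zero,
      nsmul_eq_mul, mul_comm]
  -- put it together
  set K : ℕ := ∑ π : Equiv.Perm (Fin (n+m)),
    (Finset.univ.filter (fun τ : Equiv.Perm (Fin (n+m)) =>
      ∀ y, ((π y : ℕ) < n ↔ (τ y : ℕ) < n))).card with hK
  have hSval : ∑ z : GState p (n+m) × GState p (n+m), ‖Np p n m v z.2 z.1‖ ^ 2
      = (((n+m).factorial : ℝ))⁻¹ ^ 2 * 2 ^ (p * (n+m)) * (K : ℝ) := by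
    have hcx : ((∑ z : GState p (n+m) × GState p (n+m),
          ‖Np p n m v z.2 z.1‖ ^ 2 : ℝ) : ℂ)
        = (((((n+m).factorial : ℝ))⁻¹ ^ 2 * 2 ^ (p * (n+m)) * (K : ℝ) : ℝ) : ℂ) := by
      rw [hofReal, hexp]
      simp only [horth, hcount]
      rw [← Finset.mul_sum, hK]
      push_cast
      ring
    exact_mod_cast hcx
  have hKle : (K : ℝ) ≤ ((n+m).factorial : ℝ) * (n.factorial * m.factorial) := by
    have h1 : K ≤ (n+m).factorial * (n.factorial * m.factorial) := by
      calc K ≤ ∑ _π : Equiv.Perm (Fin (n+m)), n.factorial * m.factorial :=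
            Finset.sum_le_sum fun π _ => count_le n m π
        _ = (n+m).factorial * (n.factorial * m.factorial) := by
            rw [Finset.sum_const, Finset.card_univ, Fintype.card_perm, Fintype.card_fin,
              smul_eq_mul]
    exact_mod_cast h1
  rw [hSval]
  have hq0 : (0:ℝ) < ((n+m).factorial : ℝ) := by
    exact_mod_cast Nat.factorial_pos (n+m)
  calc (((n+m).factorial : ℝ))⁻¹ ^ 2 * 2 ^ (p * (n+m)) * (K : ℝ)
      ≤ (((n+m).factorial : ℝ))⁻¹ ^ 2 * 2 ^ (p * (n+m)) *
        (((n+m).factorial : ℝ) * (n.factorial * m.factorial)) := by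
        apply mul_le_mul_of_nonneg_left hKle
        positivity
    _ = 2 ^ (p * (n+m)) * ((n.factorial * m.factorial : ℝ) / (n+m).factorial) := by
        field_simp

lemma hT_pi (p n m : ℕ) (M : GMat p (n+m)) (v : Fin p → Fin 4) (π : Equiv.Perm (Fin (n+m))) :
    ((permMat p (n+m) π * M * (permMat p (n+m) π)ᴴ) *
        gridPauli (fun x (y : Fin (n+m)) => if (y : ℕ) < n then v x else 0)).trace
      = (M * Gp p n m v π).trace := by
  rw [mul_assoc (permMat p (n+m) π * M) (permMat p (n+m) π)ᴴ _,
    Matrix.trace_mul_comm,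
    ← mul_assoc ((permMat p (n+m) π)ᴴ *
      gridPauli (fun x (y : Fin (n+m)) => if (y : ℕ) < n then v x else 0))
      (permMat p (n+m) π) M,
    Matrix.trace_mul_comm,
    perm_conj_pauli π (fun x (y : Fin (n+m)) => if (y : ℕ) < n then v x else 0)]
  rfl

lemma hT_lemma (p n m : ℕ) (M : GMat p (n+m)) (v : Fin p → Fin 4) :
    (permAvg p (n+m) M *
        gridPauli (fun x (y : Fin (n+m)) => if (y : ℕ) < n then v x else 0)).trace
      = (M * Np p n m v).trace := by
  rw [permAvg, Matrix.smul_mul, Matrix.trace_smul, Matrix.sum_mul, Matrix.trace_sum,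
    Finset.sum_congr rfl (fun π _ => hT_pi p n m M v π),
    Np, Matrix.mul_smul, Matrix.trace_smul, Matrix.mul_sum, Matrix.trace_sum]

lemma hT2_lemma (p n m : ℕ) (M : GMat p (n+m)) (v : Fin p → Fin 4) :
    (M * Np p n m v).trace
      = ∑ z : GState p (n+m) × GState p (n+m), M z.1 z.2 * Np p n m v z.2 z.1 := by
  rw [Fintype.sum_prod_type (f := fun z : GState p (n+m) × GState p (n+m) =>
    M z.1 z.2 * Np p n m v z.2 z.1)]
  rw [Matrix.trace]
  simp only [Matrix.diag_apply, Matrix.mul_apply]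

end CoeffBoundAux

open CoeffBoundAux

/-- **Coefficient bound in the proof of Lemma 3.**
Let `p, n, m` be positive, `q = n+m`, and let `M` be a Hermitian matrix on the grid with
(L2→L2) operator norm at most 1. Let `M̃` be its average over all column permutations.
Then for every nonzero `v ∈ {0,1,2,3}^p`, with `A` the `p × q` matrix whose first `n`
columns each equal `v` and whose last `m` columns are zero,
`|tr(M̃ · σ_A)| ≤ 2^{pq} · (binom(n+m, n))^{−1/2}`. -/
theorem coefficient_bound (p n m : ℕ) (hp : 0 < p) (hn : 0 < n) (hm : 0 < m)
    (M : GMat p (n + m)) (hM : M.IsHermitian)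
    (hMnorm : ‖Matrix.toEuclideanCLM (𝕜 := ℂ) M‖ ≤ 1)
    (v : Fin p → Fin 4) (hv : v ≠ fun _ => 0) :
    ‖(permAvg p (n + m) M *
        gridPauli (fun x y => if (y : ℕ) < n then v x else 0)).trace‖ ≤
      2 ^ (p * (n + m)) * (((n + m).choose n : ℝ)) ^ (-(1 : ℝ) / 2) := by
  classical
  have habs : ‖(permAvg p (n+m) M *
        gridPauli (fun x (y : Fin (n+m)) => if (y : ℕ) < n then v x else 0)).trace‖
      ≤ ∑ z : GState p (n+m) × GState p (n+m),
          ‖M z.1 z.2‖ * ‖Np p n m v z.2 z.1‖ := by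
    rw [hT_lemma p n m M v, hT2_lemma p n m M v]
    refine le_trans (norm_sum_le _ _) (le_of_eq ?_)
    exact Finset.sum_congr rfl fun z _ => norm_mul _ _
  have hCS : (∑ z : GState p (n+m) × GState p (n+m),
        ‖M z.1 z.2‖ * ‖Np p n m v z.2 z.1‖) ^ 2
      ≤ (∑ z : GState p (n+m) × GState p (n+m), ‖M z.1 z.2‖ ^ 2)
        * (∑ z : GState p (n+m) × GState p (n+m), ‖Np p n m v z.2 z.1‖ ^ 2) :=
    Finset.sum_mul_sq_le_sq_mul_sq Finset.univ _ _
  have hS1 : ∑ z : GState p (n+m) × GState p (n+m), ‖M z.1 z.2‖ ^ 2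
      ≤ 2 ^ (p * (n+m)) := by
    rw [Fintype.sum_prod_type]
    rw [Finset.sum_comm]
    refine le_trans (Finset.sum_le_sum fun f _ => col_bound M hMnorm f) ?_
    rw [Finset.sum_const, Finset.card_univ]
    simp only [nsmul_eq_mul, mul_one]
    rw [show Fintype.card (GState p (n+m)) = 2 ^ (p * (n+m)) by
      simp [Fintype.card_fun]]
    push_cast
    exact le_rfl
  have hS2 := S2_bound p n m v hv
  -- arithmetic
  have hC0 : (0:ℝ) < ((n+m).choose n : ℝ) := by
    exact_mod_cast Nat.choose_pos (Nat.le_add_right n m)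
  have hfm0 : (0:ℝ) < (n.factorial * m.factorial : ℝ) := by
    have := Nat.factorial_pos n
    have := Nat.factorial_pos m
    positivity
  have hchoose : ((n+m).factorial : ℝ)
      = ((n+m).choose n : ℝ) * (n.factorial * m.factorial) := by
    have h := Nat.choose_mul_factorial_mul_factorial (Nat.le_add_right n m)
    have h2 : n + m - n = m := by omega
    rw [h2] at h
    have h3 : ((n+m).choose n * n.factorial * m.factorial : ℕ) = (n+m).factorial := h
    push_cast [← h3]
    ring
  have hfrac : ((n.factorial * m.factorial : ℝ) / ((n+m).factorial : ℝ))
      = (((n+m).choose n : ℝ))⁻¹ := by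
    rw [hchoose, div_mul_eq_div_div_swap, div_self (ne_of_gt hfm0), one_div]
  rw [hfrac] at hS2
  set a : ℝ := ∑ z : GState p (n+m) × GState p (n+m),
      ‖M z.1 z.2‖ * ‖Np p n m v z.2 z.1‖ with ha
  have ha0 : 0 ≤ a := Finset.sum_nonneg fun z _ => by positivity
  have ha2 : a ^ 2 ≤ ((2:ℝ) ^ (p * (n+m))) ^ 2 * (((n+m).choose n : ℝ))⁻¹ := by
    refine le_trans hCS ?_
    calc (∑ z : GState p (n+m) × GState p (n+m), ‖M z.1 z.2‖ ^ 2)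
          * (∑ z : GState p (n+m) × GState p (n+m), ‖Np p n m v z.2 z.1‖ ^ 2)
        ≤ (2:ℝ) ^ (p * (n+m)) * ((2:ℝ) ^ (p * (n+m)) * (((n+m).choose n : ℝ))⁻¹) := by
          apply mul_le_mul hS1 hS2 (Finset.sum_nonneg fun z _ => by positivity)
            (by positivity)
      _ = ((2:ℝ) ^ (p * (n+m))) ^ 2 * (((n+m).choose n : ℝ))⁻¹ := by ring
  have hsqrt : a ≤ 2 ^ (p * (n+m)) * Real.sqrt ((((n+m).choose n : ℝ))⁻¹) := by
    have h2 : a ≤ Real.sqrt (((2:ℝ) ^ (p * (n+m))) ^ 2 * (((n+m).choose n : ℝ))⁻¹) := by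
      rw [← Real.sqrt_sq ha0]
      exact Real.sqrt_le_sqrt ha2
    refine le_trans h2 (le_of_eq ?_)
    rw [Real.sqrt_mul (by positivity), Real.sqrt_sq (by positivity)]
  have hrpow : (((n+m).choose n : ℝ)) ^ (-(1:ℝ)/2)
      = Real.sqrt ((((n+m).choose n : ℝ))⁻¹) := by
    rw [Real.sqrt_inv, neg_div, Real.rpow_neg hC0.le, Real.sqrt_eq_rpow]
  rw [hrpow]
  exact le_trans habs hsqrt

end
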